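/- Every linear constant-domain Kripke frame whose (common) domain is finite validates CD, ED, and SW. -/

import Mathlib

/-- A Kripke frame for intuitionistic predicate logic: a partially ordered
set of worlds `W` together with nonempty, monotonically increasing domains
`D w ⊆ U`. -/
structure KFrame (W U : Type) where
  le : W → W → Prop
  le_refl : ∀ w, le w w
  le_trans : ∀ {u v w}, le u v → le v w → le u w
  le_antisymm : ∀ {u v}, le u v → le v u → u = v
  D : W → Set U
  D_nonempty : ∀ w, (D w).Nonempty
  D_mono : ∀ {v w}, le v w → D v ⊆ D w

namespace KFrame

variable {W U : Type} (F : KFrame W U)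

/-- A persistent interpretation of a unary predicate (equivalently, the
forcing of a formula `A(x)` with one free variable): it respects the domains
and is monotone along the accessibility relation. -/
def Persistent1 (A : W → U → Prop) : Prop :=
  (∀ w d, A w d → d ∈ F.D w) ∧ ∀ v w d, F.le v w → A v d → A w d

/-- A persistent interpretation of a nullary predicate (equivalently, the
forcing of a formula `B` in which `x` is not free). -/
def Persistent0 (B : W → Prop) : Prop :=
  ∀ v w, F.le v w → B v → B w

/-- Forcing, at world `w`, of the Constant Domain principle
`(∀x (A(x) ∨ B)) → (∀x A(x) ∨ B)` (`x` not free in `B`), with the Kripke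
forcing clauses unfolded. -/
def ForcesCD (A : W → U → Prop) (B : W → Prop) (w : W) : Prop :=
  ∀ v, F.le w v →
    (∀ u, F.le v u → ∀ d ∈ F.D u, A u d ∨ B u) →
    ((∀ u, F.le v u → ∀ d ∈ F.D u, A u d) ∨ B v)

/-- Forcing, at world `w`, of the Existential Distribution principle
`(B → ∃x A(x)) → ∃x (B → A(x))` (`x` not free in `B`). -/
def ForcesED (A : W → U → Prop) (B : W → Prop) (w : W) : Prop :=
  ∀ v, F.le w v →
    (∀ u, F.le v u → B u → ∃ d ∈ F.D u, A u d) →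
    ∃ d ∈ F.D v, ∀ u, F.le v u → B u → A u d

/-- Forcing, at world `w`, of the Quantifier Switch principle
`(∀x A(x) → B) → ∃x (A(x) → B)` (`x` not free in `B`). -/
def ForcesSW (A : W → U → Prop) (B : W → Prop) (w : W) : Prop :=
  ∀ v, F.le w v →
    (∀ u, F.le v u → (∀ u', F.le u u' → ∀ d ∈ F.D u', A u' d) → B u) →
    ∃ d ∈ F.D v, ∀ u, F.le v u → A u d → B u

/-- The frame validates the scheme `CD`, i.e. every instance holds at every
world in every Kripke model based on the frame. -/
def ValidCD : Prop :=
  ∀ A B, F.Persistent1 A → F.Persistent0 B → ∀ w, F.ForcesCD A B w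

/-- The frame validates the scheme `ED`. -/
def ValidED : Prop :=
  ∀ A B, F.Persistent1 A → F.Persistent0 B → ∀ w, F.ForcesED A B w

/-- The frame validates the scheme `SW`. -/
def ValidSW : Prop :=
  ∀ A B, F.Persistent1 A → F.Persistent0 B → ∀ w, F.ForcesSW A B w

/-- The frame has constant domains. -/
def ConstantDomain : Prop := ∀ {v w}, F.le v w → F.D v = F.D w

/-- The frame is linear: any two worlds above a common world are comparable. -/
def Linear : Prop := ∀ u v w, F.le w u → F.le w v → (F.le u v ∨ F.le v u)

/-- Condition `WF`: for every world `w` the upward cone `{v | w ≼ v}` is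
well-founded under `≼` (no infinite strictly descending chains). -/
def UpsetWF : Prop :=
  ∀ w, Set.WellFoundedOn {v | F.le w v} (fun a b => F.le a b ∧ a ≠ b)

/-- Condition `cWF`: for every world `w` the upward cone `{v | w ≼ v}` is
conversely well-founded under `≼` (no infinite strictly ascending chains). -/
def UpsetCWF : Prop :=
  ∀ w, Set.WellFoundedOn {v | F.le w v} (fun a b => F.le b a ∧ a ≠ b)

end KFrame

lemma kframe_exists_min {W U : Type} (F : KFrame W U) (hlin : F.Linear) (v : W)
    (S : Set W) (hS : S.Finite) (hne : S.Nonempty) (hsub : ∀ u ∈ S, F.le v u) :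
    ∃ m ∈ S, ∀ u ∈ S, F.le m u := by
  revert hne hsub
  refine Set.Finite.induction_on S hS (fun hne _ => absurd hne (by simp)) ?_
  rintro a s ha hs ih hne hsub
  rcases s.eq_empty_or_nonempty with rfl | hsne
  · exact ⟨a, Set.mem_insert _ _, by simp [F.le_refl]⟩
  · obtain ⟨m, hm, hmin⟩ := ih hsne (fun u hu => hsub u (Set.mem_insert_of_mem _ hu))
    rcases hlin a m v (hsub a (Set.mem_insert _ _)) (hsub m (Set.mem_insert_of_mem _ hm)) with h | h
    · exact ⟨a, Set.mem_insert _ _, fun u hu => by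
        rcases hu with rfl | hu
        · exact F.le_refl u
        · exact F.le_trans h (hmin u hu)⟩
    · exact ⟨m, Set.mem_insert_of_mem _ hm, fun u hu => by
        rcases hu with rfl | hu
        · exact h
        · exact hmin u hu⟩

lemma kframe_exists_max {W U : Type} (F : KFrame W U) (hlin : F.Linear) (v : W)
    (S : Set W) (hS : S.Finite) (hne : S.Nonempty) (hsub : ∀ u ∈ S, F.le v u) :
    ∃ m ∈ S, ∀ u ∈ S, F.le u m := by
  revert hne hsub
  refine Set.Finite.induction_on S hS (fun hne _ => absurd hne (by simp)) ?_
  rintro a s ha hs ih hne hsub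
  rcases s.eq_empty_or_nonempty with rfl | hsne
  · exact ⟨a, Set.mem_insert _ _, by simp [F.le_refl]⟩
  · obtain ⟨m, hm, hmax⟩ := ih hsne (fun u hu => hsub u (Set.mem_insert_of_mem _ hu))
    rcases hlin a m v (hsub a (Set.mem_insert _ _)) (hsub m (Set.mem_insert_of_mem _ hm)) with h | h
    · exact ⟨m, Set.mem_insert_of_mem _ hm, fun u hu => by
        rcases hu with rfl | hu
        · exact h
        · exact hmax u hu⟩
    · exact ⟨a, Set.mem_insert _ _, fun u hu => by
        rcases hu with rfl | hu
        · exact F.le_refl u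
        · exact F.le_trans (hmax u hu) h⟩

/-- Every linear constant-domain Kripke frame whose
(common) domain is finite validates `CD`, `ED` and `SW`. -/
theorem shifts_valid_of_linear_constant_finite {W U : Type} (F : KFrame W U)
    (hlin : F.Linear) (hcd : F.ConstantDomain)
    (hfin : ∀ w, (F.D w).Finite) :
    F.ValidCD ∧ F.ValidED ∧ F.ValidSW := by
  refine ⟨?_, ?_, ?_⟩
  · -- CD
    intro A B hA hB w v hwv h
    by_cases hb : B v
    · exact Or.inr hb
    · left
      intro u hvu d hd
      have hdv : d ∈ F.D v := (hcd hvu) ▸ hd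
      rcases h v (F.le_refl v) d hdv with hAv | hBv
      · exact hA.2 v u d hvu hAv
      · exact absurd hBv hb
  · -- ED
    intro A B hA hB w v hwv h
    by_contra hcon
    push_neg at hcon
    have hcon' : ∀ d ∈ F.D v, ∃ u, F.le v u ∧ B u ∧ ¬ A u d := by
      intro d hd
      obtain ⟨u, hu, hbu, hna⟩ := hcon d hd
      exact ⟨u, hu, hbu, hna⟩
    choose uf hu1 hu2 hu3 using hcon'
    have hDfin : Finite ↥(F.D v) := (hfin v).to_subtype
    set g : ↥(F.D v) → W := fun d => uf d.1 d.2 with hg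
    have hSfin : (Set.range g).Finite := Set.finite_range g
    obtain ⟨d0, hd0⟩ := F.D_nonempty v
    have hSne : (Set.range g).Nonempty := ⟨g ⟨d0, hd0⟩, Set.mem_range_self _⟩
    have hSsub : ∀ u ∈ Set.range g, F.le v u := by
      rintro u ⟨d, rfl⟩; exact hu1 d.1 d.2
    obtain ⟨m, hm, hmin⟩ := kframe_exists_min F hlin v _ hSfin hSne hSsub
    obtain ⟨d, rfl⟩ := hm
    have hvm : F.le v (g d) := hu1 d.1 d.2
    obtain ⟨e, he, hAe⟩ := h (g d) hvm (hu2 d.1 d.2)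
    have hev : e ∈ F.D v := (hcd hvm) ▸ he
    have hle : F.le (g d) (g ⟨e, hev⟩) := hmin _ (Set.mem_range_self _)
    exact hu3 e hev (hA.2 _ _ e hle hAe)
  · -- SW
    intro A B hA hB w v hwv h
    by_contra hcon
    push_neg at hcon
    have hcon' : ∀ d ∈ F.D v, ∃ u, F.le v u ∧ A u d ∧ ¬ B u := by
      intro d hd
      obtain ⟨u, hu, ha, hnb⟩ := hcon d hd
      exact ⟨u, hu, ha, hnb⟩
    choose uf hu1 hu2 hu3 using hcon'
    have hDfin : Finite ↥(F.D v) := (hfin v).to_subtype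
    set g : ↥(F.D v) → W := fun d => uf d.1 d.2 with hg
    have hSfin : (Set.range g).Finite := Set.finite_range g
    obtain ⟨d0, hd0⟩ := F.D_nonempty v
    have hSne : (Set.range g).Nonempty := ⟨g ⟨d0, hd0⟩, Set.mem_range_self _⟩
    have hSsub : ∀ u ∈ Set.range g, F.le v u := by
      rintro u ⟨d, rfl⟩; exact hu1 d.1 d.2
    obtain ⟨m, hm, hmax⟩ := kframe_exists_max F hlin v _ hSfin hSne hSsub
    obtain ⟨d, rfl⟩ := hm
    have hvm : F.le v (g d) := hu1 d.1 d.2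
    have hBm : B (g d) := by
      apply h (g d) hvm
      intro u' hu' e he
      have hev : e ∈ F.D v := (hcd (F.le_trans hvm hu')) ▸ he
      have : F.le (g ⟨e, hev⟩) (g d) := hmax _ (Set.mem_range_self _)
      exact hA.2 _ _ e (F.le_trans this hu') (hu2 e hev)
    exact hu3 d.1 d.2 hBm
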